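/- arXiv:1708.08110 — 2 statements merged into one kernel-verified Lean document; each statement's English description precedes it below -/
import Mathlib

section
/- For ω ∈ (0, 2π) and m ≥ 1, define F_m(ω) = (∑_{ℓ∈ℤ} |ω+2πℓ|^{-2m}) / (∑_{ℓ∈ℤ} |ω+2πℓ|^{-2m-2}). Then F_m attains its maximum on (0, 2π) at ω = π. -/
open Real MeasureTheory Set

namespace FratioAux

lemma lint_exp (k : ℕ) (hk : 1 ≤ k) {c : ℝ} (hc : 0 < c) :
    ∫⁻ s in Ioi (0:ℝ), ENNReal.ofReal (s ^ (k-1) * Real.exp (-(c * s)))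
      = ENNReal.ofReal ((Nat.factorial (k-1)) / c ^ k) := by
  have hcongr : ∀ s ∈ Ioi (0:ℝ), s ^ ((k:ℝ)-1) * Real.exp (-(c * s))
      = s ^ (k-1) * Real.exp (-(c * s)) := by
    intro s hs
    rw [show (k:ℝ)-1 = ((k-1 : ℕ):ℝ) by push_cast [Nat.cast_sub hk]; ring,
      Real.rpow_natCast]
  have hInt : IntegrableOn (fun s : ℝ => s ^ (k-1) * Real.exp (-(c*s))) (Ioi 0) := by
    have h0 := integrableOn_rpow_mul_exp_neg_mul_rpow (p := 1) (s := (k:ℝ)-1) (b := c)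
      (by have h : (1:ℝ) ≤ (k:ℝ) := Nat.one_le_cast.mpr hk
          linarith) zero_lt_one hc
    simp only [Real.rpow_one] at h0
    refine (h0.congr_fun (fun s hs => ?_) measurableSet_Ioi)
    simp only [neg_mul] at *
    exact (hcongr s hs)
  rw [← MeasureTheory.ofReal_integral_eq_lintegral_ofReal hInt
    (Filter.eventually_of_mem (self_mem_ae_restrict measurableSet_Ioi)
      (fun s hs => mul_nonneg (pow_nonneg (le_of_lt (mem_Ioi.mp hs)) _) (Real.exp_pos _).le))]
  congr 1
  have h1 := integral_rpow_mul_exp_neg_mul_Ioi (a := (k:ℝ)) (r := c)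
    (by exact_mod_cast Nat.lt_of_lt_of_le Nat.zero_lt_one hk) hc
  rw [← setIntegral_congr_fun measurableSet_Ioi hcongr, h1,
    show Real.Gamma (k:ℝ) = ((Nat.factorial (k-1)) : ℝ) by
      rw [show (k:ℝ) = ((k-1 : ℕ):ℝ) + 1 by push_cast [Nat.cast_sub hk]; ring,
        Real.Gamma_nat_eq_factorial],
    Real.rpow_natCast, div_pow, one_pow]
  ring

lemma exp_hasSum {θ : ℝ} (hθ : θ ∈ Ioo 0 (2*π)) {s : ℝ} (hs : 0 < s) :
    HasSum (fun ℓ : ℤ => Real.exp (-(|θ + 2*π*ℓ| * s)))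
      (Real.cosh (s * (π - θ)) / Real.sinh (π * s)) := by
  obtain ⟨hθ0, hθ2⟩ := hθ
  have hπ := Real.pi_pos
  set f : ℤ → ℝ := fun ℓ => Real.exp (-(|θ + 2*π*ℓ| * s)) with hf
  set r := Real.exp (-(2*π*s)) with hr
  have hr0 : 0 ≤ r := (Real.exp_pos _).le
  have hr1 : r < 1 := Real.exp_lt_one_iff.mpr (by nlinarith)
  have hgeo := hasSum_geometric_of_lt_one hr0 hr1
  have h1 : HasSum (fun n : ℕ => f n) (Real.exp (-(θ*s)) * (1-r)⁻¹) := by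
    refine (hgeo.mul_left (Real.exp (-(θ*s)))).congr_fun (fun n => ?_)
    simp only [hf, hr]
    push_cast
    rw [← Real.exp_nat_mul, ← Real.exp_add, abs_of_pos (by positivity)]
    ring_nf
  have h2 : HasSum (fun n : ℕ => f (-((n:ℤ)+1))) (Real.exp (-((2*π-θ)*s)) * (1-r)⁻¹) := by
    refine (hgeo.mul_left (Real.exp (-((2*π-θ)*s)))).congr_fun (fun n => ?_)
    simp only [hf, hr]
    push_cast
    rw [abs_of_neg (by nlinarith : θ + 2*π*(-((n:ℝ)+1)) < 0), ← Real.exp_nat_mul,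
      ← Real.exp_add]
    ring_nf
  have hval : Real.exp (-(θ*s)) * (1-r)⁻¹ + Real.exp (-((2*π-θ)*s)) * (1-r)⁻¹
      = Real.cosh (s * (π - θ)) / Real.sinh (π * s) := by
    have hden : 0 < 1 - r := by linarith
    have hsinh : 0 < Real.sinh (π*s) := Real.sinh_pos_iff.mpr (by positivity)
    rw [← add_mul, eq_div_iff hsinh.ne', Real.cosh_eq, Real.sinh_eq]
    have key : Real.exp (π * s) - Real.exp (-(π * s)) = Real.exp (π * s) * (1 - r) := by
      rw [hr, mul_sub, mul_one, ← Real.exp_add]; ring_nf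
    rw [key]
    field_simp
    rw [add_mul, ← Real.exp_add, ← Real.exp_add]
    congr 1 <;> congr 1 <;> ring
  rw [← hval]
  exact h1.of_nat_of_neg_add_one h2

lemma abs_pos_of_mem {θ : ℝ} (hθ : θ ∈ Ioo 0 (2*π)) (ℓ : ℤ) : 0 < |θ + 2*π*ℓ| := by
  obtain ⟨h0, h2⟩ := hθ
  have hπ := Real.pi_pos
  rcases le_or_gt 0 ℓ with h | h
  · have : (0:ℝ) ≤ ℓ := by exact_mod_cast h
    rw [abs_pos]; nlinarith
  · have h' : ℓ ≤ -1 := by omega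
    have : (ℓ:ℝ) ≤ -1 := by exact_mod_cast h'
    rw [abs_pos]; nlinarith

lemma sum_eq_integral (k : ℕ) (hk : 2 ≤ k) {θ : ℝ} (hθ : θ ∈ Ioo 0 (2*π)) :
    (∑' ℓ : ℤ, ENNReal.ofReal (1 / |θ + 2*π*ℓ| ^ k)) * ENNReal.ofReal (Nat.factorial (k-1))
      = ∫⁻ s in Ioi (0:ℝ),
          ENNReal.ofReal (s ^ (k-1) * (Real.cosh (s*(π-θ)) / Real.sinh (π*s))) := by
  have hk1 : 1 ≤ k := le_trans (by norm_num) hk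
  have habs := abs_pos_of_mem hθ
  rw [ENNReal.tsum_mul_right.symm]
  have hterm : ∀ ℓ : ℤ, ENNReal.ofReal (1 / |θ + 2*π*ℓ| ^ k)
      * ENNReal.ofReal (Nat.factorial (k-1))
      = ∫⁻ s in Ioi (0:ℝ), ENNReal.ofReal (s ^ (k-1) * Real.exp (-(|θ + 2*π*ℓ| * s))) := by
    intro ℓ
    rw [lint_exp k hk1 (habs ℓ), ← ENNReal.ofReal_mul (by positivity)]
    congr 1
    field_simp
  simp_rw [hterm]
  rw [← MeasureTheory.lintegral_tsum
    (fun ℓ => (Measurable.ennreal_ofReal (by fun_prop)).aemeasurable)]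
  refine setLIntegral_congr_fun measurableSet_Ioi ?_
  intro s hs
  have hs' : (0:ℝ) < s := hs
  have hsum := (exp_hasSum hθ hs')
  calc ∑' ℓ : ℤ, ENNReal.ofReal (s ^ (k-1) * Real.exp (-(|θ + 2*π*ℓ| * s)))
      = ENNReal.ofReal (s ^ (k-1))
          * ∑' ℓ : ℤ, ENNReal.ofReal (Real.exp (-(|θ + 2*π*ℓ| * s))) := by
        rw [← ENNReal.tsum_mul_left]
        congr 1; funext ℓ
        rw [← ENNReal.ofReal_mul (by positivity)]
    _ = ENNReal.ofReal (s ^ (k-1)) * ENNReal.ofReal (Real.cosh (s*(π-θ)) / Real.sinh (π*s)) := by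
        rw [← ENNReal.ofReal_tsum_of_nonneg (fun ℓ => (Real.exp_pos _).le) hsum.summable,
          hsum.tsum_eq]
    _ = ENNReal.ofReal (s ^ (k-1) * (Real.cosh (s*(π-θ)) / Real.sinh (π*s))) := by
        rw [← ENNReal.ofReal_mul (by positivity)]

noncomputable def Kint (j : ℕ) (τ : ℝ) : ENNReal :=
  ∫⁻ s in Ioi (0:ℝ), ENNReal.ofReal (s ^ j * (Real.cosh (s*τ) / Real.sinh (π*s)))

lemma double_add {F1 G1 F2 G2 : ℝ → ENNReal} (hF1 : Measurable F1) (hG1 : Measurable G1)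
    (hF2 : Measurable F2) (hG2 : Measurable G2) :
    ∫⁻ x in Ioi (0:ℝ), ∫⁻ y in Ioi (0:ℝ), (F1 x * G1 y + F2 x * G2 y)
      = (∫⁻ x in Ioi (0:ℝ), F1 x) * (∫⁻ y in Ioi (0:ℝ), G1 y)
        + (∫⁻ x in Ioi (0:ℝ), F2 x) * (∫⁻ y in Ioi (0:ℝ), G2 y) := by
  have hinner : ∀ x : ℝ, ∫⁻ y in Ioi (0:ℝ), (F1 x * G1 y + F2 x * G2 y)
      = F1 x * (∫⁻ y in Ioi (0:ℝ), G1 y) + F2 x * (∫⁻ y in Ioi (0:ℝ), G2 y) := by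
    intro x
    rw [lintegral_add_left (hG1.const_mul _), lintegral_const_mul _ hG1,
      lintegral_const_mul _ hG2]
  simp_rw [hinner]
  rw [lintegral_add_left (hF1.mul_const _), lintegral_mul_const _ hF1,
    lintegral_mul_const _ hF2]

lemma ofReal_cheb_pt {p q sx sy cx cy : ℝ} (hp : 0 ≤ p) (hq : 0 ≤ q) (hsx : 0 ≤ sx)
    (hsy : 0 ≤ sy) (hcx : 0 ≤ cx) (hcy : 0 ≤ cy)
    (hre : sx*cy + sy*cx ≤ sx*cx + sy*cy) :
    (ENNReal.ofReal p * ENNReal.ofReal cx) * (ENNReal.ofReal q * ENNReal.ofReal sy)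
      + (ENNReal.ofReal p * ENNReal.ofReal sx) * (ENNReal.ofReal q * ENNReal.ofReal cy)
    ≤ (ENNReal.ofReal p * ENNReal.ofReal sx * ENNReal.ofReal cx) * ENNReal.ofReal q
      + ENNReal.ofReal p * (ENNReal.ofReal q * ENNReal.ofReal sy * ENNReal.ofReal cy) := by
  lift p to NNReal using hp
  lift q to NNReal using hq
  lift sx to NNReal using hsx with sx' hsx'
  lift sy to NNReal using hsy with sy' hsy'
  lift cx to NNReal using hcx with cx' hcx'
  lift cy to NNReal using hcy with cy' hcy'
  simp only [ENNReal.ofReal_coe_nnreal, ← ENNReal.coe_mul, ← ENNReal.coe_add,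
    ENNReal.coe_le_coe, ← NNReal.coe_le_coe]
  push_cast
  nlinarith [hre, mul_nonneg p.coe_nonneg q.coe_nonneg,
    mul_le_mul_of_nonneg_left hre (mul_nonneg p.coe_nonneg q.coe_nonneg)]

lemma cheb (j : ℕ) (τ : ℝ) :
    Kint j τ * Kint (j+2) 0 ≤ Kint j 0 * Kint (j+2) τ := by
  classical
  set P : ℝ → ENNReal := fun x => ENNReal.ofReal (x ^ j / Real.sinh (π*x)) with hP
  set X : ℝ → ENNReal := fun x => ENNReal.ofReal (x ^ 2) with hX
  set C : ℝ → ENNReal := fun x => ENNReal.ofReal (Real.cosh (x*τ)) with hC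
  have hPm : Measurable P := by fun_prop
  have hXm : Measurable X := by fun_prop
  have hCm : Measurable C := by fun_prop
  have hKτ : Kint j τ = ∫⁻ x in Ioi (0:ℝ), P x * C x := by
    refine setLIntegral_congr_fun measurableSet_Ioi (fun x hx => ?_)
    have hx' : (0:ℝ) < x := hx
    rw [hP, hC, ← ENNReal.ofReal_mul (by positivity)]
    congr 1; ring
  have hK0 : Kint j 0 = ∫⁻ x in Ioi (0:ℝ), P x := by
    refine setLIntegral_congr_fun measurableSet_Ioi (fun x hx => ?_)
    rw [hP, mul_zero, Real.cosh_zero]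
    congr 1; ring
  have hKτ2 : Kint (j+2) τ = ∫⁻ x in Ioi (0:ℝ), P x * X x * C x := by
    refine setLIntegral_congr_fun measurableSet_Ioi (fun x hx => ?_)
    have hx' : (0:ℝ) < x := hx
    rw [hP, hX, hC, ← ENNReal.ofReal_mul (by positivity), ← ENNReal.ofReal_mul (by positivity)]
    congr 1; ring
  have hK02 : Kint (j+2) 0 = ∫⁻ x in Ioi (0:ℝ), P x * X x := by
    refine setLIntegral_congr_fun measurableSet_Ioi (fun x hx => ?_)
    have hx' : (0:ℝ) < x := hx
    rw [hP, hX, mul_zero, Real.cosh_zero, ← ENNReal.ofReal_mul (by positivity)]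
    congr 1; ring
  rw [hKτ, hK0, hKτ2, hK02]
  have key : ∀ x ∈ Ioi (0:ℝ), ∀ y ∈ Ioi (0:ℝ),
      (P x * C x) * (P y * X y) + (P x * X x) * (P y * C y)
        ≤ (P x * X x * C x) * P y + P x * (P y * X y * C y) := by
    intro x hx y hy
    have hx' : (0:ℝ) < x := hx
    have hy' : (0:ℝ) < y := hy
    have hsx : (0:ℝ) ≤ Real.sinh (π*x) := (Real.sinh_pos_iff.mpr (by positivity)).le
    have hsy : (0:ℝ) ≤ Real.sinh (π*y) := (Real.sinh_pos_iff.mpr (by positivity)).le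
    have hpx : (0:ℝ) ≤ x ^ j / Real.sinh (π*x) := div_nonneg (by positivity) hsx
    have hpy : (0:ℝ) ≤ y ^ j / Real.sinh (π*y) := div_nonneg (by positivity) hsy
    have hcx : (0:ℝ) ≤ Real.cosh (x*τ) := (Real.cosh_pos _).le
    have hcy : (0:ℝ) ≤ Real.cosh (y*τ) := (Real.cosh_pos _).le
    have hξx : (0:ℝ) ≤ x ^ 2 := sq_nonneg x
    have hξy : (0:ℝ) ≤ y ^ 2 := sq_nonneg y
    have hre : x^2 * Real.cosh (y*τ) + y^2 * Real.cosh (x*τ)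
        ≤ x^2 * Real.cosh (x*τ) + y^2 * Real.cosh (y*τ) := by
      rcases le_total x y with h | h
      · have h2 : x^2 ≤ y^2 := by nlinarith
        have hc : Real.cosh (x*τ) ≤ Real.cosh (y*τ) := by
          rw [Real.cosh_le_cosh, abs_mul, abs_mul, abs_of_pos hx', abs_of_pos hy']
          exact mul_le_mul_of_nonneg_right h (abs_nonneg τ)
        nlinarith
      · have h2 : y^2 ≤ x^2 := by nlinarith
        have hc : Real.cosh (y*τ) ≤ Real.cosh (x*τ) := by
          rw [Real.cosh_le_cosh, abs_mul, abs_mul, abs_of_pos hx', abs_of_pos hy']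
          exact mul_le_mul_of_nonneg_right h (abs_nonneg τ)
        nlinarith
    simp only [hP, hX, hC]
    exact ofReal_cheb_pt hpx hpy hξx hξy hcx hcy hre
  have hd1 := double_add (F1 := fun x => P x * C x) (G1 := fun y => P y * X y)
    (F2 := fun x => P x * X x) (G2 := fun y => P y * C y)
    (hPm.mul hCm) (hPm.mul hXm) (hPm.mul hXm) (hPm.mul hCm)
  have hd2 := double_add (F1 := fun x => P x * X x * C x) (G1 := P)
    (F2 := P) (G2 := fun y => P y * X y * C y)
    ((hPm.mul hXm).mul hCm) hPm hPm ((hPm.mul hXm).mul hCm)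
  have hmono : (∫⁻ x in Ioi (0:ℝ), ∫⁻ y in Ioi (0:ℝ),
        ((P x * C x) * (P y * X y) + (P x * X x) * (P y * C y)))
      ≤ ∫⁻ x in Ioi (0:ℝ), ∫⁻ y in Ioi (0:ℝ),
        ((P x * X x * C x) * P y + P x * (P y * X y * C y)) := by
    refine lintegral_mono_ae (((ae_restrict_mem measurableSet_Ioi)).mono fun x hx => ?_)
    refine lintegral_mono_ae (((ae_restrict_mem measurableSet_Ioi)).mono fun y hy => ?_)
    exact key x hx y hy
  rw [hd1, hd2] at hmono
  have h2 : 2 * ((∫⁻ x in Ioi (0:ℝ), P x * C x) * (∫⁻ x in Ioi (0:ℝ), P x * X x))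
      ≤ 2 * ((∫⁻ x in Ioi (0:ℝ), P x) * (∫⁻ x in Ioi (0:ℝ), P x * X x * C x)) := by
    rw [two_mul, two_mul]
    calc _ ≤ (∫⁻ x in Ioi (0:ℝ), P x * X x * C x) * (∫⁻ x in Ioi (0:ℝ), P x)
          + (∫⁻ x in Ioi (0:ℝ), P x) * (∫⁻ x in Ioi (0:ℝ), P x * X x * C x) := by
          rw [mul_comm (∫⁻ x in Ioi (0:ℝ), P x * X x) (∫⁻ x in Ioi (0:ℝ), P x * C x)] at hmono
          exact hmono
      _ = _ := by rw [mul_comm (∫⁻ x in Ioi (0:ℝ), P x * X x * C x)]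
  exact (ENNReal.mul_le_mul_iff_right (two_ne_zero) (ENNReal.ofNat_ne_top)).mp h2

lemma summable_term (k : ℕ) (hk : 2 ≤ k) (θ : ℝ) :
    Summable (fun ℓ : ℤ => 1 / |θ + 2*π*ℓ| ^ k) := by
  have hπ := Real.pi_pos
  have h := (Real.summable_one_div_int_add_rpow (θ/(2*π)) (k:ℝ)).mpr
    (by exact_mod_cast lt_of_lt_of_le one_lt_two (by exact_mod_cast hk))
  refine ((h.mul_left (1/(2*π)^k)).congr fun ℓ => ?_)
  rw [Real.rpow_natCast]
  have hfact : θ + 2*π*ℓ = (2*π) * ((ℓ:ℝ) + θ/(2*π)) := by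
    field_simp
    ring
  have habs : |θ + 2*π*ℓ| = (2*π) * |(ℓ:ℝ) + θ/(2*π)| := by
    rw [hfact, abs_mul, abs_of_pos (by positivity : (0:ℝ) < 2*π)]
  rw [habs, mul_pow ((2:ℝ)*π) |(ℓ:ℝ) + θ/(2*π)| k, one_div_mul_one_div]

end FratioAux

open FratioAux

/-- The ratio `F_m(ω) = (∑_{ℓ∈ℤ} |ω+2πℓ|^{-2m}) / (∑_{ℓ∈ℤ} |ω+2πℓ|^{-2m-2})`. -/
noncomputable def Fratio (m : ℕ) (ω : ℝ) : ℝ :=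
  (∑' ℓ : ℤ, 1 / |ω + 2 * π * ℓ| ^ (2 * m)) /
    (∑' ℓ : ℤ, 1 / |ω + 2 * π * ℓ| ^ (2 * m + 2))

theorem Fratio_max_at_pi (m : ℕ) (hm : 1 ≤ m) (ω : ℝ) (hω : ω ∈ Set.Ioo 0 (2 * π)) :
    Fratio m ω ≤ Fratio m π := by
  have hπ := Real.pi_pos
  have hπmem : π ∈ Ioo 0 (2*π) := ⟨hπ, by linarith⟩
  have hk1 : 2 ≤ 2*m := by omega
  have hk2 : 2 ≤ 2*m+2 := by omega
  -- real tsums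
  set T : ℝ → ℕ → ℝ := fun θ k => ∑' ℓ : ℤ, 1 / |θ + 2*π*ℓ| ^ k with hT
  have hsum : ∀ (θ : ℝ) (k : ℕ), 2 ≤ k → Summable (fun ℓ : ℤ => 1 / |θ + 2*π*ℓ| ^ k) :=
    fun θ k hk => summable_term k hk θ
  have hofReal : ∀ (θ : ℝ), θ ∈ Ioo 0 (2*π) → ∀ (k : ℕ), 2 ≤ k →
      ENNReal.ofReal (T θ k) = ∑' ℓ : ℤ, ENNReal.ofReal (1 / |θ + 2*π*ℓ| ^ k) := by
    intro θ hθ k hk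
    exact ENNReal.ofReal_tsum_of_nonneg (fun ℓ => by positivity) (hsum θ k hk)
  -- the main ENNReal inequality
  have hmain : ENNReal.ofReal (T ω (2*m)) * ENNReal.ofReal (T π (2*m+2))
      ≤ ENNReal.ofReal (T π (2*m)) * ENNReal.ofReal (T ω (2*m+2)) := by
    have e1 := sum_eq_integral (2*m) hk1 hω
    have e2 := sum_eq_integral (2*m+2) hk2 hω
    have e3 := sum_eq_integral (2*m) hk1 hπmem
    have e4 := sum_eq_integral (2*m+2) hk2 hπmem
    rw [← hofReal ω hω (2*m) hk1] at e1
    rw [← hofReal ω hω (2*m+2) hk2] at e2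
    rw [← hofReal π hπmem (2*m) hk1] at e3
    rw [← hofReal π hπmem (2*m+2) hk2] at e4
    have hKe1 : ENNReal.ofReal (T ω (2*m)) * ENNReal.ofReal (Nat.factorial (2*m-1))
        = Kint (2*m-1) (π - ω) := e1
    have hKe2 : ENNReal.ofReal (T ω (2*m+2)) * ENNReal.ofReal (Nat.factorial (2*m+2-1))
        = Kint (2*m+2-1) (π - ω) := e2
    have hKe3 : ENNReal.ofReal (T π (2*m)) * ENNReal.ofReal (Nat.factorial (2*m-1))
        = Kint (2*m-1) (π - π) := e3
    have hKe4 : ENNReal.ofReal (T π (2*m+2)) * ENNReal.ofReal (Nat.factorial (2*m+2-1))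
        = Kint (2*m+2-1) (π - π) := e4
    have hidx : 2*m+2-1 = (2*m-1)+2 := by omega
    have hzero : π - π = 0 := by ring
    rw [hidx] at hKe2 hKe4
    rw [hzero] at hKe3 hKe4
    have hcheb := cheb (2*m-1) (π - ω)
    rw [← hKe1, ← hKe2, ← hKe3, ← hKe4] at hcheb
    -- cancel the factorial factors
    set c1 := ENNReal.ofReal (Nat.factorial (2*m-1)) with hc1
    set c2 := ENNReal.ofReal (Nat.factorial ((2*m-1)+2)) with hc2
    have hc1ne : c1 ≠ 0 := by
      rw [hc1, ne_eq, ENNReal.ofReal_eq_zero, not_le]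
      exact_mod_cast Nat.factorial_pos _
    have hc2ne : c2 ≠ 0 := by
      rw [hc2, ne_eq, ENNReal.ofReal_eq_zero, not_le]
      exact_mod_cast Nat.factorial_pos _
    have hc1top : c1 ≠ ⊤ := ENNReal.ofReal_ne_top
    have hc2top : c2 ≠ ⊤ := ENNReal.ofReal_ne_top
    have hrw : ∀ a b : ENNReal, (a * c1) * (b * c2) = (a * b) * (c1 * c2) := by
      intro a b; ring
    rw [hrw, hrw] at hcheb
    have hcc : c1 * c2 ≠ 0 := by
      simp [mul_eq_zero, hc1ne, hc2ne]
    have hcctop : c1 * c2 ≠ ⊤ := ENNReal.mul_ne_top hc1top hc2top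
    exact (ENNReal.mul_le_mul_iff_left hcc hcctop).mp hcheb
  -- transfer to ℝ
  have hTnonneg : ∀ θ k, 0 ≤ T θ k := by
    intro θ k
    exact tsum_nonneg (fun ℓ => by positivity)
  have hreal : T ω (2*m) * T π (2*m+2) ≤ T π (2*m) * T ω (2*m+2) := by
    have := hmain
    rw [← ENNReal.ofReal_mul (hTnonneg ω (2*m)), ← ENNReal.ofReal_mul (hTnonneg π (2*m))] at this
    exact (ENNReal.ofReal_le_ofReal_iff (mul_nonneg (hTnonneg π (2*m)) (hTnonneg ω (2*m+2)))).mp this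
  -- positivity of denominators
  have hpos : ∀ (θ : ℝ), θ ∈ Ioo 0 (2*π) → 0 < T θ (2*m+2) := by
    intro θ hθ
    refine Summable.tsum_pos (hsum θ (2*m+2) hk2) (fun ℓ => by positivity) 0 ?_
    have h0 := abs_pos_of_mem hθ 0
    exact one_div_pos.mpr (pow_pos h0 _)
  have hDω := hpos ω hω
  have hDπ := hpos π hπmem
  rw [Fratio, Fratio, div_le_div_iff₀ hDω hDπ]
  exact hreal
end

section
/- For m ≥ 1, all roots of the Euler–Frobenius polynomial E_{2m-1}(z) (the polynomial with coefficients N_{2m-1}(j), j=1,…,2m-1, i.e. ∑_{j} N_{2m-1}(j) z^{j-1}) are real, negative, and simple. -/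
open Polynomial Filter Set

/-- The cardinal B-spline of order `m`. -/
noncomputable def cardinalBSpline (m : ℕ) (x : ℝ) : ℝ :=
  (1 / (m.factorial : ℝ)) *
    ∑ k ∈ Finset.range (m + 2), (-1 : ℝ) ^ k * ((m + 1).choose k : ℝ) * (max (x - k) 0) ^ m

/-- The Euler–Frobenius polynomial `E_n(z) = n! ∑_{j=1}^{n} N_n(j) z^{j-1}`, over ℂ. -/
noncomputable def eulerFrobenius (n : ℕ) : Polynomial ℂ :=
  ∑ j ∈ Finset.range n, Polynomial.C ((n.factorial : ℂ) * (cardinalBSpline n (j + 1) : ℂ)) * X ^ j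

/-- Eulerian numbers (as reals), explicit formula. -/
noncomputable def eulA (n j : ℕ) : ℝ :=
  ∑ i ∈ Finset.range (j + 1), (-1 : ℝ) ^ i * ((n + 1).choose i : ℝ) * ((j : ℝ) + 1 - i) ^ n

lemma factorial_mul_bspline (n j : ℕ) (hn : 1 ≤ n) (hj : j < n) :
    (n.factorial : ℝ) * cardinalBSpline n ((j : ℝ) + 1) = eulA n j := by
  unfold cardinalBSpline eulA
  rw [← mul_assoc, mul_one_div, div_self (by positivity : (n.factorial : ℝ) ≠ 0), one_mul]
  rw [← Finset.sum_subset (Finset.range_subset_range.2 (by omega : j + 1 ≤ n + 2))]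
  · refine Finset.sum_congr rfl fun i hi => ?_
    have hi' : (i : ℝ) ≤ (j : ℝ) := by
      exact_mod_cast Nat.lt_succ_iff.1 (Finset.mem_range.1 hi)
    rw [max_eq_left (by linarith)]
  · intro i _ hni
    have hij : j + 1 ≤ i := by simpa using hni
    have h0 : (j : ℝ) + 1 - i ≤ 0 := by
      have : ((j : ℝ) + 1) ≤ (i : ℝ) := by exact_mod_cast hij
      linarith
    rw [max_eq_right h0, zero_pow (by omega : n ≠ 0), mul_zero]

lemma eulA_zero (n : ℕ) : eulA n 0 = 1 := by
  simp [eulA]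

lemma choose_cast_id1 (n i : ℕ) :
    ((i : ℝ) + 1) * ((n + 1).choose (i + 1) : ℝ) = ((n : ℝ) + 1) * (n.choose i : ℝ) := by
  have h := Nat.add_one_mul_choose_eq n i
  have : ((n + 1) * n.choose i : ℕ) = ((n + 1).choose (i + 1) * (i + 1) : ℕ) := by
    simpa [Nat.succ_eq_add_one] using h
  have := congrArg (fun x : ℕ => (x : ℝ)) this
  push_cast at this
  linarith

lemma choose_cast_id2 (n i : ℕ) :
    ((i : ℝ) + 1) * ((n + 1).choose (i + 1) : ℝ) = ((n : ℝ) + 1 - i) * ((n + 1).choose i : ℝ) := by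
  rcases le_or_gt i (n + 1) with h | h
  · have h1 := Nat.choose_succ_right_eq (n + 1) i
    have := congrArg (fun x : ℕ => (x : ℝ)) h1
    push_cast [Nat.cast_sub h] at this
    linarith
  · rw [Nat.choose_eq_zero_of_lt (by omega), Nat.choose_eq_zero_of_lt (by omega)]
    norm_num

lemma eulA_rec (n k : ℕ) :
    eulA (n + 1) (k + 1) =
      ((k : ℝ) + 2) * eulA n (k + 1) + ((n : ℝ) - k) * eulA n k := by
  unfold eulA
  rw [Finset.sum_range_succ' _ (k + 1), Finset.sum_range_succ' (fun i =>
      (-1 : ℝ) ^ i * ((n + 1).choose i : ℝ) * (((k + 1 : ℕ) : ℝ) + 1 - i) ^ n) (k + 1)]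
  rw [mul_add, Finset.mul_sum, Finset.mul_sum]
  have hsum : ∑ i ∈ Finset.range (k + 1),
        (-1 : ℝ) ^ (i + 1) * ((n + 1 + 1).choose (i + 1) : ℝ) * (((k + 1 : ℕ) : ℝ) + 1 - ((i + 1 : ℕ) : ℝ)) ^ (n + 1)
      = (∑ i ∈ Finset.range (k + 1),
          ((k : ℝ) + 2) * ((-1 : ℝ) ^ (i + 1) * ((n + 1).choose (i + 1) : ℝ) * (((k + 1 : ℕ) : ℝ) + 1 - ((i + 1 : ℕ) : ℝ)) ^ n))
        + ∑ i ∈ Finset.range (k + 1),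
          ((n : ℝ) - k) * ((-1 : ℝ) ^ i * ((n + 1).choose i : ℝ) * ((k : ℝ) + 1 - i) ^ n) := by
    rw [← Finset.sum_add_distrib]
    refine Finset.sum_congr rfl fun i _ => ?_
    have hsplit : (((n + 1 + 1).choose (i + 1) : ℝ)) = ((n + 1).choose i : ℝ) + ((n + 1).choose (i + 1) : ℝ) := by
      exact_mod_cast congrArg (fun x : ℕ => (x : ℝ)) (Nat.choose_succ_succ (n + 1) i)
    have key := choose_cast_id2 n i
    push_cast
    push_cast at hsplit key
    linear_combination ((-1 : ℝ)) ^ (i + 1) * ((k : ℝ) + 1 - i) * ((k : ℝ) + 1 - i) ^ n * hsplit +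
      ((-1 : ℝ) ^ i * ((k : ℝ) + 1 - i) ^ n) * key
  have hb : ((-1 : ℝ) ^ 0 * ((n + 1 + 1).choose 0 : ℝ) * (((k + 1 : ℕ) : ℝ) + 1 - ((0 : ℕ) : ℝ)) ^ (n + 1))
      = ((k : ℝ) + 2) * ((-1 : ℝ) ^ 0 * ((n + 1).choose 0 : ℝ) * (((k + 1 : ℕ) : ℝ) + 1 - ((0 : ℕ) : ℝ)) ^ n) := by
    simp [Nat.choose_zero_right]
    push_cast; ring
  push_cast at hsum hb ⊢
  linarith

lemma eulA_vanish : ∀ n k : ℕ, 1 ≤ n → n ≤ k → eulA n k = 0 := by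
  intro n
  induction n with
  | zero => omega
  | succ n ih =>
    intro k _ hk
    rcases Nat.eq_zero_or_pos n with hn0 | hn1
    · subst hn0
      -- eulA 1 k = 0 for k ≥ 1
      obtain ⟨k', rfl⟩ : ∃ k', k = k' + 1 := ⟨k - 1, by omega⟩
      rcases Nat.eq_zero_or_pos k' with rfl | hk2
      · simp [eulA, Finset.sum_range_succ]; norm_num
      · unfold eulA
        rw [← Finset.sum_subset (Finset.range_subset_range.2 (by omega : 3 ≤ k' + 1 + 1))]
        · simp [Finset.sum_range_succ]
          push_cast
          ring
        · intro i _ hi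
          have : 2 < i := by simp at hi; omega
          rw [Nat.choose_eq_zero_of_lt (by omega)]
          norm_num
    · obtain ⟨k', rfl⟩ : ∃ k', k = k' + 1 := ⟨k - 1, by omega⟩
      rw [eulA_rec, ih (k' + 1) hn1 (by omega), ih k' hn1 (by omega)]
      ring

/-- The Euler–Frobenius polynomial over ℝ. -/
noncomputable def Ere (n : ℕ) : Polynomial ℝ :=
  ∑ j ∈ Finset.range n, C (eulA n j) * X ^ j

lemma Ere_eval (n : ℕ) (t : ℝ) : eval t (Ere n) = ∑ j ∈ Finset.range n, eulA n j * t ^ j := by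
  simp [Ere, eval_finset_sum]

lemma Ere_deriv_eval (n : ℕ) (t : ℝ) :
    eval t (derivative (Ere n)) = ∑ j ∈ Finset.range n, eulA n j * j * t ^ (j - 1) := by
  simp only [Ere, derivative_sum, derivative_C_mul_X_pow, eval_finset_sum, eval_mul, eval_C,
    eval_pow, eval_X]

lemma Ere_natDegree (n : ℕ) : (Ere n).natDegree ≤ n - 1 := by
  refine Polynomial.natDegree_sum_le_of_forall_le _ _ fun j hj => ?_
  exact le_trans (natDegree_C_mul_X_pow_le _ _) (by simp at hj; omega)

lemma Ere_coeff_zero (n : ℕ) (hn : 1 ≤ n) : (Ere n).coeff 0 = 1 := by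
  unfold Ere
  rw [finset_sum_coeff]
  rw [Finset.sum_eq_single 0]
  · simp [eulA_zero]
  · intro j _ hj
    simp [coeff_C_mul, coeff_X_pow, hj, Ne.symm hj]
  · intro h; exact absurd (Finset.mem_range.2 (by omega)) h

lemma Ere_ne_zero (n : ℕ) (hn : 1 ≤ n) : Ere n ≠ 0 := fun h => by
  have := Ere_coeff_zero n hn
  rw [h] at this
  simp at this

lemma ev_rec (n : ℕ) (hn : 1 ≤ n) (t : ℝ) :
    eval t (Ere (n + 1)) =
      (1 + n * t) * eval t (Ere n) + t * (1 - t) * eval t (derivative (Ere n)) := by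
  rw [Ere_eval, Ere_eval, Ere_deriv_eval]
  -- canonical form
  have hL : ∑ j ∈ Finset.range (n + 1), eulA (n + 1) j * t ^ j
      = ∑ j ∈ Finset.range n, (((j : ℝ) + 1) * eulA n j * t ^ j + ((n : ℝ) - j) * eulA n j * t ^ (j + 1)) := by
    rw [Finset.sum_range_succ' _ n]
    have h1 : ∀ j ∈ Finset.range n, eulA (n + 1) (j + 1) * t ^ (j + 1)
        = ((j : ℝ) + 2) * eulA n (j + 1) * t ^ (j + 1) + ((n : ℝ) - j) * eulA n j * t ^ (j + 1) := by
      intro j _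
      rw [eulA_rec]
      ring
    rw [Finset.sum_congr rfl h1, Finset.sum_add_distrib, eulA_zero]
    have h2 : ∑ j ∈ Finset.range n, ((j : ℝ) + 2) * eulA n (j + 1) * t ^ (j + 1)
        = (∑ j ∈ Finset.range n, ((j : ℝ) + 1) * eulA n j * t ^ j) - 1 := by
      have h3 := Finset.sum_range_succ' (fun j => ((j : ℝ) + 1) * eulA n j * t ^ j) n
      have h4 := Finset.sum_range_succ (fun j => ((j : ℝ) + 1) * eulA n j * t ^ j) n
      rw [eulA_vanish n n hn le_rfl] at h4
      simp only [eulA_zero] at h3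
      push_cast at h3 h4
      have h5 : ∑ j ∈ Finset.range n, (((j : ℕ) : ℝ) + 1 + 1) * eulA n (j + 1) * t ^ (j + 1)
          = ∑ j ∈ Finset.range n, ((j : ℝ) + 2) * eulA n (j + 1) * t ^ (j + 1) :=
        Finset.sum_congr rfl fun j _ => by ring
      rw [h5] at h3
      rw [h3] at h4
      linarith [h3, h4]
    rw [Finset.sum_add_distrib, h2]
    ring
  rw [hL, Finset.mul_sum, Finset.mul_sum, ← Finset.sum_add_distrib]
  refine Finset.sum_congr rfl fun j _ => ?_
  rcases j with _ | j
  · simp; ring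
  · have : t ^ (j + 1 - 1) = t ^ j := by norm_num
    rw [this]
    push_cast
    ring

lemma roots_eq_of_card {K : Type*} [Field K] (p : K[X]) (hp : p ≠ 0) (S : Finset K)
    (hd : p.natDegree ≤ S.card) (hr : ∀ x ∈ S, p.IsRoot x) : p.roots = S.val := by
  classical
  have hle : S.val ≤ p.roots := by
    rw [Multiset.le_iff_count]
    intro a
    by_cases ha : a ∈ S
    · calc Multiset.count a S.val ≤ 1 := Multiset.nodup_iff_count_le_one.1 S.nodup a
        _ ≤ Multiset.count a p.roots := Multiset.one_le_count_iff_mem.2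
            ((Polynomial.mem_roots hp).2 (hr a ha))
    · simp [Multiset.count_eq_zero_of_notMem (fun h => ha (Finset.mem_def.2 h))]
  exact (Multiset.eq_of_le_of_card_le hle
    (le_trans (Polynomial.card_roots' p) (by simpa using hd))).symm

private lemma rolle_atBot_aux {f : ℝ → ℝ} {b t₀ : ℝ} (hlt : t₀ < b)
    (hcont : ContinuousOn f (Set.Iic b))
    (hlim : Filter.Tendsto f Filter.atBot (nhds 0))
    (hb : f b = 0) (ht₀ : 0 < f t₀) :
    ∃ c < b, deriv f c = 0 := by
  have hev : ∀ᶠ t in Filter.atBot, f t ∈ Set.Ioo (-(f t₀)) (f t₀) :=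
    hlim (Ioo_mem_nhds (by linarith) ht₀)
  obtain ⟨M, hM⟩ := Filter.eventually_atBot.1 hev
  have hMt₀ : M < t₀ := by
    by_contra h
    exact absurd (hM t₀ (by linarith)).2 (lt_irrefl _)
  obtain ⟨c, hcmem, hcmax⟩ := (isCompact_Icc (a := M) (b := b)).exists_isMaxOn
    ⟨t₀, by constructor <;> linarith⟩
    (hcont.mono (fun x hx => hx.2))
  have hft₀c : f t₀ ≤ f c := hcmax ⟨by linarith, hlt.le⟩
  have hcM : M < c := by
    rcases lt_or_eq_of_le hcmem.1 with h | h
    · exact h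
    · exfalso
      have := (hM M le_rfl).2
      rw [← h] at hft₀c
      linarith
  have hcb : c < b := by
    rcases lt_or_eq_of_le hcmem.2 with h | h
    · exact h
    · exfalso; rw [h, hb] at hft₀c; linarith
  exact ⟨c, hcb, (hcmax.isLocalMax (Icc_mem_nhds hcM hcb)).deriv_eq_zero⟩

lemma rolle_atBot {f : ℝ → ℝ} {b t₀ : ℝ} (hlt : t₀ < b)
    (hcont : ContinuousOn f (Set.Iic b))
    (hlim : Filter.Tendsto f Filter.atBot (nhds 0))
    (hb : f b = 0) (ht₀ : f t₀ ≠ 0) :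
    ∃ c < b, deriv f c = 0 := by
  rcases ht₀.lt_or_gt with hneg | hpos
  · obtain ⟨c, hcb, hc⟩ := rolle_atBot_aux (f := fun t => -f t) hlt hcont.neg
      (by simpa using hlim.neg) (by simp [hb]) (by simpa using hneg)
    exact ⟨c, hcb, by rw [deriv.fun_neg] at hc; linarith⟩
  · exact rolle_atBot_aux hlt hcont hlim hb hpos

lemma Ere_roots_main : ∀ n : ℕ, ∃ r : Fin n → ℝ,
    StrictMono r ∧ (∀ i, r i < 0) ∧ ∀ i, (Ere (n + 1)).IsRoot (r i) := by
  intro n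
  induction n with
  | zero => exact ⟨Fin.elim0, fun i => i.elim0, fun i => i.elim0, fun i => i.elim0⟩
  | succ n ih =>
    classical
    obtain ⟨r, hmono, hneg, hroot⟩ := ih
    set E : Polynomial ℝ := Ere (n + 1) with hE
    -- all real roots of E are among the r i
    have hnoroot : ∀ t : ℝ, E.IsRoot t → ∃ i, r i = t := by
      intro t ht
      have hS : E.roots = (Finset.image r Finset.univ).val := by
        refine roots_eq_of_card E (Ere_ne_zero _ (by omega)) _ ?_ ?_
        · rw [Finset.card_image_of_injective _ hmono.injective, Finset.card_univ,
            Fintype.card_fin]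
          exact Ere_natDegree (n + 1)
        · intro x hx
          obtain ⟨i, _, rfl⟩ := Finset.mem_image.1 hx
          exact hroot i
      have : t ∈ E.roots := (Polynomial.mem_roots (Ere_ne_zero _ (by omega))).2 ht
      rw [hS] at this
      obtain ⟨i, _, hi⟩ := Finset.mem_image.1 (Finset.mem_def.2 this)
      exact ⟨i, hi⟩
    -- the auxiliary function
    set h : ℝ → ℝ := fun t => t * eval t E / (1 - t) ^ (n + 2) with hh
    have hasd : ∀ t : ℝ, t < 1 → HasDerivAt h (eval t (Ere (n + 2)) / (1 - t) ^ (n + 3)) t := by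
      intro t ht
      have h1 : (1 : ℝ) - t ≠ 0 := by linarith
      have hd1 : HasDerivAt (fun t : ℝ => t * eval t E)
          (1 * eval t E + t * eval t (derivative E)) t :=
        (hasDerivAt_id t).mul (E.hasDerivAt t)
      have hd2 : HasDerivAt (fun t : ℝ => (1 - t) ^ (n + 2))
          (((n + 2 : ℕ) : ℝ) * (1 - t) ^ (n + 1) * (0 - 1)) t := by
        have := ((hasDerivAt_id' t).const_sub (1 : ℝ)).fun_pow (n + 2)
        simpa using this
      have hdd := hd1.div hd2 (pow_ne_zero _ h1)
      refine HasDerivAt.congr_deriv (f := h) hdd ?_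
      rw [show Ere (n + 2) = Ere ((n + 1) + 1) from rfl, ev_rec (n + 1) (by omega) t]
      rw [← hE]
      push_cast
      field_simp
      ring
    have hcont : ContinuousOn h (Set.Iic (0 : ℝ)) := fun t ht =>
      ((hasd t (lt_of_le_of_lt ht one_pos)).differentiableAt.continuousAt).continuousWithinAt
    -- roots of Ere (n+2) from critical points of h
    have hcrit : ∀ x : ℝ, x < 1 → deriv h x = 0 → (Ere (n + 2)).IsRoot x := by
      intro x hx hd
      have := (hasd x hx).deriv
      rw [hd] at this
      have h1 : ((1 : ℝ) - x) ^ (n + 3) ≠ 0 := pow_ne_zero _ (by linarith)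
      rcases div_eq_zero_iff.1 this.symm with h | h
      · exact h
      · exact absurd h h1
    -- limit at -infty
    have hlim : Filter.Tendsto h Filter.atBot (nhds 0) := by
      set P' : Polynomial ℝ := (X * E).comp (-X) with hP'
      set Q' : Polynomial ℝ := (1 + X) ^ (n + 2) with hQ'
      have hdeg : P'.degree < Q'.degree := by
        have h1 : Q'.degree = ((n + 2 : ℕ) : WithBot ℕ) := by
          rw [hQ', degree_pow, show (1 : ℝ[X]) + X = X + C 1 by rw [C_1, add_comm],
            degree_X_add_C]
          simp
        have h2 : P'.natDegree ≤ n + 1 := by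
          rw [hP', natDegree_comp]
          have : (X * E).natDegree ≤ n + 1 := by
            refine le_trans (natDegree_mul_le) ?_
            have hEd : E.natDegree ≤ n := by
              rw [hE]; simpa using Ere_natDegree (n + 1)
            simp only [natDegree_X]
            omega
          have hnegX : (-X : ℝ[X]).natDegree = 1 := by simp
          rw [hnegX, mul_one]
          exact this
        calc P'.degree ≤ (P'.natDegree : WithBot ℕ) := degree_le_natDegree
          _ ≤ ((n + 1 : ℕ) : WithBot ℕ) := by exact_mod_cast h2
          _ < Q'.degree := by rw [h1]; exact_mod_cast (by omega : n + 1 < n + 2)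
      have T := Polynomial.div_tendsto_zero_of_degree_lt P' Q' hdeg
      have hcomp : h = (fun x => eval x P' / eval x Q') ∘ Neg.neg := by
        funext t
        simp only [Function.comp_apply, hP', hQ', eval_comp, eval_mul, eval_X, eval_neg,
          eval_pow, eval_add, eval_one, hh]
        rw [neg_neg]
        ring_nf
      rw [hcomp]
      exact T.comp tendsto_neg_atBot_atTop
    -- the extended root sequence of h on (-∞, 0]
    set q : Fin (n + 1) → ℝ := Fin.snoc r 0 with hq
    have hqmono : StrictMono q := by
      rw [Fin.strictMono_iff_lt_succ]
      intro i
      rcases Nat.lt_or_ge (i + 1) n with hlt | hge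
      · have h1 : q i.castSucc = r i := by simp [hq, Fin.snoc_castSucc]
        have h2 : i.succ = (Fin.mk (i + 1) hlt : Fin n).castSucc := by
          ext; simp
        rw [h1, h2]
        simp only [hq, Fin.snoc_castSucc]
        exact hmono (by simp [Fin.lt_def])
      · have h2 : i.succ = Fin.last n := by
          ext; simp; omega
        have h1 : q i.castSucc = r i := by simp [hq, Fin.snoc_castSucc]
        rw [h1, h2]
        simp only [hq, Fin.snoc_last]
        exact hneg i
    have hqneg : ∀ k, q k ≤ 0 := by
      intro k
      refine Fin.lastCases ?_ ?_ k
      · simp [hq, Fin.snoc_last]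
      · intro i; simp only [hq, Fin.snoc_castSucc]; exact (hneg i).le
    have hqzero : ∀ k, h (q k) = 0 := by
      intro k
      refine Fin.lastCases ?_ ?_ k
      · simp [hq, Fin.snoc_last, hh]
      · intro i
        simp only [hq, Fin.snoc_castSucc, hh]
        rw [hroot i]
        simp
    -- interior critical points
    have hmid : ∀ i : Fin n, ∃ c ∈ Set.Ioo (q i.castSucc) (q i.succ), deriv h c = 0 := by
      intro i
      refine exists_deriv_eq_zero (hqmono (Fin.castSucc_lt_succ : i.castSucc < i.succ)) ?_ ?_
      · refine hcont.mono fun x hx => ?_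
        exact le_trans hx.2 (hqneg i.succ)
      · rw [hqzero, hqzero]
    choose c hcmem hcderiv using hmid
    -- leftmost critical point
    have hleft : ∃ c < q 0, deriv h c = 0 := by
      refine rolle_atBot (t₀ := q 0 - 1) (by linarith) ?_ hlim (hqzero 0) ?_
      · refine hcont.mono fun x hx => le_trans hx (hqneg 0)
      · have ht : q 0 - 1 < 0 := by have := hqneg 0; linarith
        have hEne : eval (q 0 - 1) E ≠ 0 := by
          intro hc
          obtain ⟨i, hi⟩ := hnoroot _ hc
          have : q 0 ≤ q i.castSucc := hqmono.monotone (Fin.zero_le _)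
          rw [hq] at this
          simp only [Fin.snoc_castSucc] at this
          rw [← hq] at this
          rw [hi] at this
          linarith
        simp only [hh]
        exact div_ne_zero (mul_ne_zero (by linarith) hEne)
          (pow_ne_zero _ (by have := hqneg 0; intro hc; linarith [sub_eq_zero.1 hc]))
    obtain ⟨c₀, hc₀lt, hc₀d⟩ := hleft
    -- assemble
    set s : Fin (n + 1) → ℝ := Fin.cons c₀ c with hs
    have hsq : ∀ k : Fin (n + 1), s k < q k := by
      intro k
      refine Fin.cases ?_ ?_ k
      · simpa [hs] using hc₀lt
      · intro i
        have := (hcmem i).2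
        simpa [hs] using this
    have hsmono : StrictMono s := by
      rw [Fin.strictMono_iff_lt_succ]
      intro i
      have h1 : s i.succ = c i := by simp [hs]
      rw [h1]
      exact lt_trans (hsq i.castSucc) (hcmem i).1
    have hsneg : ∀ k, s k < 0 := fun k => lt_of_lt_of_le (hsq k) (hqneg k)
    have hsroot : ∀ k, (Ere (n + 1 + 1)).IsRoot (s k) := by
      intro k
      have hk1 : s k < 1 := by linarith [hsneg k]
      refine hcrit (s k) hk1 ?_
      refine Fin.cases ?_ ?_ k
      · simpa [hs] using hc₀d
      · intro i; simpa [hs] using hcderiv i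
    exact ⟨s, hsmono, hsneg, hsroot⟩

lemma eulerFrobenius_eq_map (n : ℕ) (hn : 1 ≤ n) :
    eulerFrobenius n = (Ere n).map (algebraMap ℝ ℂ) := by
  unfold eulerFrobenius Ere
  rw [Polynomial.map_sum]
  refine Finset.sum_congr rfl fun j hj => ?_
  rw [Polynomial.map_mul, Polynomial.map_C, Polynomial.map_pow, map_X]
  congr 1
  rw [← factorial_mul_bspline n j hn (Finset.mem_range.1 hj)]
  simp only [Complex.coe_algebraMap]
  push_cast
  ring

theorem eulerFrobenius_roots_real_neg_simple (m : ℕ) (hm : 1 ≤ m) :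
    (∀ z ∈ (eulerFrobenius (2 * m - 1)).roots, ∃ r : ℝ, z = (r : ℂ) ∧ r < 0) ∧
      (eulerFrobenius (2 * m - 1)).roots.Nodup := by
  classical
  set n : ℕ := 2 * m - 1 with hn
  have hn1 : 1 ≤ n := by omega
  obtain ⟨r, hmono, hneg, hroot⟩ := Ere_roots_main (n - 1)
  have hEre : Ere (n - 1 + 1) = Ere n := by rw [Nat.sub_add_cancel hn1]
  rw [hEre] at hroot
  have hmap := eulerFrobenius_eq_map n hn1
  have hpne : eulerFrobenius n ≠ 0 := by
    intro hc
    have : (eulerFrobenius n).coeff 0 = 1 := by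
      rw [hmap, Polynomial.coeff_map, Ere_coeff_zero n hn1, map_one]
    rw [hc] at this
    simp at this
  set S : Finset ℂ := Finset.image (fun i => ((r i : ℝ) : ℂ)) Finset.univ with hS
  have hinj : Function.Injective (fun i : Fin (n - 1) => ((r i : ℝ) : ℂ)) := by
    intro a b hab
    exact hmono.injective (Complex.ofReal_inj.1 hab)
  have hcardS : S.card = n - 1 := by
    rw [hS, Finset.card_image_of_injective _ hinj, Finset.card_univ, Fintype.card_fin]
  have hroots : (eulerFrobenius n).roots = S.val := by
    refine roots_eq_of_card _ hpne S ?_ ?_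
    · rw [hcardS, hmap]
      exact le_trans (Polynomial.natDegree_map_le) (Ere_natDegree n)
    · intro x hx
      obtain ⟨i, _, rfl⟩ := Finset.mem_image.1 hx
      rw [hmap]
      exact (hroot i).map
  constructor
  · intro z hz
    rw [hroots] at hz
    obtain ⟨i, _, hi⟩ := Finset.mem_image.1 (Finset.mem_def.2 hz)
    exact ⟨r i, hi.symm, hneg i⟩
  · rw [hroots]
    exact S.nodup
end
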